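/- The stencil coefficients c_{-1,-1}=c_{-1,1}=c_{1,-1}=c_{1,1}=-1, c_{-1,0}=c_{1,0}=c_{0,-1}=c_{0,1}=-4, c_{0,0}=20 satisfy: (a) Σ_{k,ℓ} c_{k,ℓ} = 0; (b) c_{0,0} > 0 and c_{k,ℓ} ≤ 0 for (k,ℓ) ≠ (0,0); and (c) Σ_{k=-1}^{1} Σ_{ℓ=-1}^{1} c_{k,ℓ} p(k,ℓ) = 0 for every harmonic polynomial p of total degree ≤ 7. -/

import Mathlib

open MvPolynomial

/-- The 9-point stencil: center `20`, edge midpoints `-4`, corners `-1`. -/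
noncomputable def c5 : ℤ → ℤ → ℝ := fun k l =>
  if k = 0 ∧ l = 0 then 20 else if k = 0 ∨ l = 0 then -4 else -1

noncomputable def w5 (a b : ℕ) : ℝ :=
  if ¬(Even a ∧ Even b) then 0 else if a = 0 ∧ b = 0 then 0
  else if a = 0 ∨ b = 0 then -12 else -4

noncomputable def m2 (a b : ℕ) : Fin 2 →₀ ℕ := Finsupp.single 0 a + Finsupp.single 1 b

lemma m2_app0 (a b : ℕ) : m2 a b 0 = a := by
  simp [m2, Finsupp.single_apply]

lemma m2_app1 (a b : ℕ) : m2 a b 1 = b := by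
  simp [m2, Finsupp.single_apply]

lemma eq_m2 (m : Fin 2 →₀ ℕ) : m = m2 (m 0) (m 1) := by
  ext i; fin_cases i <;> simp [m2_app0, m2_app1]

lemma m2_add0 (a b n : ℕ) : m2 a b + Finsupp.single 0 n = m2 (a + n) b := by
  simp only [m2]; rw [add_right_comm, ← Finsupp.single_add]

lemma m2_add1 (a b n : ℕ) : m2 a b + Finsupp.single 1 n = m2 a (b + n) := by
  simp only [m2]; rw [add_assoc, ← Finsupp.single_add]

def S5 : Finset (ℕ × ℕ) := {(2,0),(0,2),(4,0),(0,4),(2,2),(6,0),(0,6),(4,2),(2,4)}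

lemma wlem (a b : ℕ) (h : a + b ≤ 7) : (a, b) ∈ S5 ∨ w5 a b = 0 := by
  have ha : a ≤ 7 := by omega
  have hb : b ≤ 7 := by omega
  interval_cases a <;> interval_cases b <;>
    first
      | omega
      | (left; decide)
      | (right; norm_num [w5, Nat.even_iff])

lemma pow_cases (n : ℕ) :
    ((-1:ℝ)^n = 1 ∧ (0:ℝ)^n = 1 ∧ n = 0) ∨
    ((-1:ℝ)^n = 1 ∧ (0:ℝ)^n = 0 ∧ Even n ∧ n ≠ 0) ∨
    ((-1:ℝ)^n = -1 ∧ (0:ℝ)^n = 0 ∧ ¬ Even n) := by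
  rcases Nat.even_or_odd n with he | ho
  · rcases Nat.eq_zero_or_pos n with h0 | h0
    · subst h0; left; norm_num
    · right; left
      exact ⟨he.neg_one_pow, zero_pow (Nat.pos_iff_ne_zero.mp h0), he, Nat.pos_iff_ne_zero.mp h0⟩
  · right; right
    exact ⟨ho.neg_one_pow, zero_pow (Nat.pos_iff_ne_zero.mp ho.pos), Nat.not_even_iff_odd.mpr ho⟩

lemma swap3 {α β γ : Type*} (s : Finset α) (t : Finset β) (u : Finset γ)
    (g : α → β → γ → ℝ) :
    ∑ k ∈ s, ∑ l ∈ t, ∑ m ∈ u, g k l m = ∑ m ∈ u, ∑ k ∈ s, ∑ l ∈ t, g k l m :=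
  calc ∑ k ∈ s, ∑ l ∈ t, ∑ m ∈ u, g k l m
      = ∑ k ∈ s, ∑ m ∈ u, ∑ l ∈ t, g k l m :=
        Finset.sum_congr rfl fun k _ => Finset.sum_comm
    _ = ∑ m ∈ u, ∑ k ∈ s, ∑ l ∈ t, g k l m := Finset.sum_comm

lemma expand3 (f : ℤ → ℝ) : ∑ k ∈ ({-1, 0, 1} : Finset ℤ), f k = f (-1) + f 0 + f 1 := by
  rw [show ({-1, 0, 1} : Finset ℤ) = insert (-1) (insert 0 {1}) from rfl,
    Finset.sum_insert (by decide), Finset.sum_insert (by decide), Finset.sum_singleton]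
  ring

lemma stencil (a b : ℕ) :
    ∑ k ∈ ({-1, 0, 1} : Finset ℤ), ∑ l ∈ ({-1, 0, 1} : Finset ℤ),
      c5 k l * ((k:ℝ)^a * (l:ℝ)^b) = w5 a b := by
  simp only [expand3]
  norm_num [c5]
  rcases pow_cases a with ⟨ha1, ha2, ha3⟩ | ⟨ha1, ha2, ha3, ha4⟩ | ⟨ha1, ha2, ha3⟩ <;>
    rcases pow_cases b with ⟨hb1, hb2, hb3⟩ | ⟨hb1, hb2, hb3, hb4⟩ | ⟨hb1, hb2, hb3⟩ <;>
      simp [w5, ha1, ha2, ha3, hb1, hb2, hb3] <;> (try simp_all) <;> (try ring)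

lemma coeff_pderiv' (i : Fin 2) (p : MvPolynomial (Fin 2) ℝ) (m : Fin 2 →₀ ℕ) :
    coeff m (pderiv i p) = ((m i : ℝ) + 1) * coeff (m + Finsupp.single i 1) p := by
  induction p using MvPolynomial.induction_on' with
  | monomial s a =>
    rw [pderiv_monomial, coeff_monomial, coeff_monomial]
    by_cases h : s = m + Finsupp.single i 1
    · subst h
      rw [if_pos (add_tsub_cancel_right (a := m) (b := Finsupp.single i 1)), if_pos rfl]
      simp [Finsupp.add_apply, Finsupp.single_apply]
      ring
    · rw [if_neg h]
      by_cases h2 : s - Finsupp.single i 1 = m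
      · rw [if_pos h2]
        have hsi : s i = 0 := by
          by_contra hs
          apply h
          rw [← h2,
            tsub_add_cancel_of_le (Finsupp.single_le_iff.mpr (Nat.one_le_iff_ne_zero.mpr hs))]
        simp [hsi]
      · rw [if_neg h2]; ring
  | add p q hp hq => simp only [map_add, coeff_add, hp, hq]; ring

theorem stmt5 :
    (∑ k ∈ ({-1, 0, 1} : Finset ℤ), ∑ l ∈ ({-1, 0, 1} : Finset ℤ), c5 k l = 0) ∧
    (0 < c5 0 0 ∧ ∀ k ∈ ({-1, 0, 1} : Finset ℤ), ∀ l ∈ ({-1, 0, 1} : Finset ℤ),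
      ¬(k = 0 ∧ l = 0) → c5 k l ≤ 0) ∧
    (∀ p : MvPolynomial (Fin 2) ℝ, p.totalDegree ≤ 7 →
      pderiv 0 (pderiv 0 p) + pderiv 1 (pderiv 1 p) = 0 →
      ∑ k ∈ ({-1, 0, 1} : Finset ℤ), ∑ l ∈ ({-1, 0, 1} : Finset ℤ),
        c5 k l * eval (fun i => if i = 0 then (k : ℝ) else (l : ℝ)) p = 0) := by
  refine ⟨?_, ⟨?_, ?_⟩, ?_⟩
  · simp only [expand3]; norm_num [c5]
  · norm_num [c5]
  · intro k hk l hl hne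
    fin_cases hk <;> fin_cases hl <;> simp_all [c5]
  · intro p hdeg hharm
    classical
    have heval : ∀ k l : ℤ, eval (fun i => if i = 0 then (k:ℝ) else (l:ℝ)) p
        = ∑ m ∈ p.support, coeff m p * ((k:ℝ)^(m 0) * (l:ℝ)^(m 1)) := by
      intro k l
      rw [eval_eq']
      refine Finset.sum_congr rfl fun m _ => ?_
      rw [Fin.prod_univ_two]
      norm_num
    have h1 : ∑ k ∈ ({-1, 0, 1} : Finset ℤ), ∑ l ∈ ({-1, 0, 1} : Finset ℤ),
        c5 k l * eval (fun i => if i = 0 then (k : ℝ) else (l : ℝ)) p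
        = ∑ m ∈ p.support, coeff m p * w5 (m 0) (m 1) := by
      simp only [heval, Finset.mul_sum]
      rw [swap3]
      refine Finset.sum_congr rfl fun m _ => ?_
      rw [← stencil (m 0) (m 1), Finset.mul_sum]
      refine Finset.sum_congr rfl fun k _ => ?_
      rw [Finset.mul_sum]
      exact Finset.sum_congr rfl fun l _ => by ring
    set f : (Fin 2 →₀ ℕ) → ℝ := fun m => coeff m p * w5 (m 0) (m 1) with hf
    set T : Finset (Fin 2 →₀ ℕ) := S5.image (fun q => m2 q.1 q.2) with hT
    have e1 : ∑ m ∈ p.support, f m = ∑ m ∈ p.support ∪ T, f m :=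
      Finset.sum_subset Finset.subset_union_left
        (fun m _ hm => by simp [hf, notMem_support_iff.mp hm])
    have e2 : ∑ m ∈ T, f m = ∑ m ∈ p.support ∪ T, f m := by
      refine Finset.sum_subset Finset.subset_union_right (fun m hm hmT => ?_)
      have hms : m ∈ p.support := by
        rcases Finset.mem_union.mp hm with h | h
        · exact h
        · exact absurd h hmT
      have hdm : m 0 + m 1 ≤ 7 := by
        have hle := le_totalDegree (p := p) hms
        have hsum : m.sum (fun _ e => e) = m 0 + m 1 := by
          rw [Finsupp.sum_fintype] <;> simp [Fin.sum_univ_two]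
        omega
      rcases wlem (m 0) (m 1) hdm with hS | hw
      · exact absurd (Finset.mem_image.mpr ⟨(m 0, m 1), hS, (eq_m2 m).symm⟩) hmT
      · simp [hf, hw]
    have himg : ∑ m ∈ T, f m = ∑ q ∈ S5, f (m2 q.1 q.2) := by
      rw [hT]
      refine Finset.sum_image (fun q hq r hr hqr => ?_)
      have h0 := DFunLike.congr_fun hqr 0
      have h1' := DFunLike.congr_fun hqr 1
      rw [m2_app0, m2_app0] at h0
      rw [m2_app1, m2_app1] at h1'
      exact Prod.ext h0 h1'
    have hrel : ∀ a b : ℕ, ((a:ℝ)+1)*((a:ℝ)+2) * coeff (m2 (a+2) b) p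
        + ((b:ℝ)+1)*((b:ℝ)+2) * coeff (m2 a (b+2)) p = 0 := by
      intro a b
      have h := congrArg (coeff (m2 a b)) hharm
      rw [coeff_add, coeff_zero, coeff_pderiv', coeff_pderiv', coeff_pderiv', coeff_pderiv',
        m2_add0, m2_add0, m2_add1, m2_add1] at h
      simp only [m2_app0, m2_app1] at h
      push_cast at h
      nlinarith [h]
    rw [h1, e1, ← e2, himg]
    have r1 := hrel 0 0
    have r2 := hrel 2 0
    have r3 := hrel 0 2
    have r4 := hrel 4 0
    have r5 := hrel 2 2
    have r6 := hrel 0 4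
    norm_num at r1 r2 r3 r4 r5 r6
    simp only [S5]
    rw [Finset.sum_insert (by decide), Finset.sum_insert (by decide),
      Finset.sum_insert (by decide), Finset.sum_insert (by decide),
      Finset.sum_insert (by decide), Finset.sum_insert (by decide),
      Finset.sum_insert (by decide), Finset.sum_insert (by decide), Finset.sum_singleton]
    simp only [hf, m2_app0, m2_app1]
    norm_num [w5, Nat.even_iff]
    linarith
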